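/- Let N be a prime, let P, Q ∈ ℤ[x] be polynomials with P(0) = Q(0) = 0, and let α, β ∈ (1/N)ℤ/ℤ. Define p(x) = e(αx² + βx) on ℤ/Nℤ. Then for all functions f, g, k : ℤ/Nℤ → ℂ, Λ(f,g,k,p) = 𝔼_{x,y} f̃(x) g̃(x+P(y)) k̃(x+Q(y)) e(2α·P(y)·Q(y)), where f̃(x) = f(x)e(−αx²−βx), g̃(x) = g(x)e(αx²+βx), and k̃(x) = k(x)e(αx²+βx). -/
import Mathlib


open Finset

noncomputable section

/-- Evaluation of an integer polynomial at an element of `ZMod N`. -/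
def pEvalZ {N : ℕ} (P : Polynomial ℤ) (y : ZMod N) : ZMod N :=
  Polynomial.eval₂ (Int.castRingHom (ZMod N)) y P

/-- `Λ(f,g,k,p) = 𝔼_{x,y} f(x) g(x+P(y)) k(x+Q(y)) p(x+P(y)+Q(y))`. -/
def Lam {N : ℕ} [NeZero N] (P Q : Polynomial ℤ) (f g k p : ZMod N → ℂ) : ℂ :=
  (∑ x : ZMod N, ∑ y : ZMod N,
    f x * g (x + pEvalZ P y) * k (x + pEvalZ Q y) *
      p (x + pEvalZ P y + pEvalZ Q y)) / (N : ℂ) ^ 2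

/-- `e(x/N)` for `x : ZMod N`: the additive character `x ↦ e^{2πi x/N}`.
For `α = a/N ∈ (1/N)ℤ/ℤ` and `x : ZMod N`, `e(αx) = eN (a*x)`. -/
def eN {N : ℕ} [NeZero N] (x : ZMod N) : ℂ :=
  Complex.exp (2 * Real.pi * Complex.I * (x.val : ℂ) / (N : ℂ))

lemma eN_add {N : ℕ} [NeZero N] (u v : ZMod N) : eN (u + v) = eN u * eN v := by
  unfold eN
  rw [← Complex.exp_add]
  have hN : (N : ℂ) ≠ 0 := Nat.cast_ne_zero.2 (NeZero.ne N)
  set q : ℕ := (u.val + v.val) / N with hq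
  have h := Nat.mod_add_div (u.val + v.val) N
  have hc : (((u + v).val : ℕ) : ℂ) = ((u.val : ℂ) + v.val) - N * (q : ℂ) := by
    rw [ZMod.val_add]
    rw [← hq] at h
    have := congrArg (fun n : ℕ => (n : ℂ)) h
    simp only [Nat.cast_add, Nat.cast_mul] at this
    linear_combination this
  have h1 : Complex.exp (-(q : ℂ) * (2 * Real.pi * Complex.I)) = 1 := by
    have h2 := Complex.exp_int_mul_two_pi_mul_I (-(q : ℤ))
    push_cast at h2
    convert h2 using 2
  have harg : 2 * (Real.pi : ℂ) * Complex.I * (((u + v).val : ℕ) : ℂ) / N =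
      2 * Real.pi * Complex.I * (u.val : ℂ) / N +
        2 * Real.pi * Complex.I * (v.val : ℂ) / N +
        -(q : ℂ) * (2 * Real.pi * Complex.I) := by
    rw [hc]
    field_simp
    ring
  rw [harg, Complex.exp_add, h1, mul_one]

theorem stmt17 (N : ℕ) [NeZero N] (hN : Nat.Prime N)
    (P Q : Polynomial ℤ) (hP0 : P.eval 0 = 0) (hQ0 : Q.eval 0 = 0)
    (a b : ZMod N) (f g k : ZMod N → ℂ) :
    Lam P Q f g k (fun x => eN (a * x ^ 2 + b * x)) =
      (∑ x : ZMod N, ∑ y : ZMod N,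
        (f x * eN (-(a * x ^ 2 + b * x))) *
        (g (x + pEvalZ P y) *
          eN (a * (x + pEvalZ P y) ^ 2 + b * (x + pEvalZ P y))) *
        (k (x + pEvalZ Q y) *
          eN (a * (x + pEvalZ Q y) ^ 2 + b * (x + pEvalZ Q y))) *
        eN (2 * a * pEvalZ P y * pEvalZ Q y)) / (N : ℂ) ^ 2 := by
  unfold Lam
  congr 1
  refine Finset.sum_congr rfl fun x _ => Finset.sum_congr rfl fun y _ => ?_
  set u := pEvalZ P y
  set v := pEvalZ Q y
  have key : a * (x + u + v) ^ 2 + b * (x + u + v) =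
      (-(a * x ^ 2 + b * x)) + ((a * (x + u) ^ 2 + b * (x + u)) +
        ((a * (x + v) ^ 2 + b * (x + v)) + 2 * a * u * v)) := by ring
  simp only [key, eN_add]
  ring

end
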